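/- Let n ≥ 3 and β ∈ ℝ, and set cₗ = ∫₀^∞ x^l exp(−n x²/2) dx = 2^{(l−1)/2} · n^{−(l+1)/2} · Γ((l+1)/2). Then there exists a constant B ∈ ℝ, depending only on n and β (not on z), such that for every z ∈ ℝⁿ with Σᵢ zᵢ = 0 and Σᵢ zᵢ² = n: ∫₀^∞ ∫_{-∞}^∞ Σ_{i=1}^n [ (β/2)(a + b·zᵢ)³ + (1/8)(a + b·zᵢ)⁴ ] · exp(−n(a²+b²)/2) · b^{n−2} da db = (c₀/4) · ( c_{n+2} · Σ_{i=1}^n zᵢ⁴ + 4β · c_{n+1} · Σ_{i=1}^n zᵢ³ ) + B, where c₀ = √(π/(2n)). In particular the locally best invariant statistic against the generalized hyperbolic alternatives with fixed skewness parameter β is c_{n+2} Σᵢ zᵢ⁴ + 4β c_{n+1} Σᵢ zᵢ³. -/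

import Mathlib

open MeasureTheory

/-- `cₗ = 2^{(l-1)/2} n^{-(l+1)/2} Γ((l+1)/2)`, the value of `∫₀^∞ x^l exp(-n x²/2) dx`. -/
noncomputable def ghCoeff (n l : ℕ) : ℝ :=
  (2 : ℝ) ^ (((l : ℝ) - 1) / 2) * (n : ℝ) ^ (-((l : ℝ) + 1) / 2) * Real.Gamma (((l : ℝ) + 1) / 2)

section ghAux

open Real Set

lemma gh_integral (n l : ℕ) (hn : 0 < n) :
    (∫ x in Set.Ioi (0 : ℝ), x ^ l * Real.exp (-((n : ℝ) * x ^ 2) / 2)) = ghCoeff n l := by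
  have hn' : (0:ℝ) < n := by exact_mod_cast hn
  have hq : (-1:ℝ) < (l:ℝ) := by
    have := Nat.cast_nonneg (α := ℝ) l; linarith
  have key := integral_rpow_mul_exp_neg_mul_rpow (p := 2) (q := (l:ℝ)) (b := (n:ℝ)/2)
    two_pos hq (by positivity)
  have h1 : (∫ x in Set.Ioi (0 : ℝ), x ^ (l:ℝ) * Real.exp (-((n:ℝ)/2) * x ^ (2:ℝ)))
      = ∫ x in Set.Ioi (0 : ℝ), x ^ l * Real.exp (-((n : ℝ) * x ^ 2) / 2) := by
    refine setIntegral_congr_fun measurableSet_Ioi (fun x hx => ?_)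
    rw [Real.rpow_natCast, Real.rpow_two]
    ring_nf
  rw [← h1, key, ghCoeff]
  have h2 : ((n:ℝ)/2) ^ (-((l:ℝ) + 1) / 2)
      = (n:ℝ) ^ (-((l:ℝ) + 1) / 2) / (2:ℝ) ^ (-((l:ℝ) + 1) / 2) := by
    rw [Real.div_rpow (by positivity) (by norm_num)]
  have h3 : (2:ℝ) ^ (((l:ℝ) - 1) / 2) * (2:ℝ) ^ (-((l:ℝ) + 1) / 2) = 1/2 := by
    rw [← Real.rpow_add two_pos, show ((l:ℝ) - 1) / 2 + -((l:ℝ) + 1) / 2 = -1 by ring,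
      Real.rpow_neg_one]
    norm_num
  have h4 : (2:ℝ) ^ (-((l:ℝ) + 1) / 2) ≠ 0 := by positivity
  have h5 : (2:ℝ) ^ (((l:ℝ) - 1) / 2) = (1/2) / (2:ℝ) ^ (-((l:ℝ) + 1) / 2) :=
    eq_div_of_mul_eq h4 h3
  rw [h2, h5]; ring

lemma gh_zero (n : ℕ) : ghCoeff n 0 = Real.sqrt (Real.pi / (2 * (n : ℝ))) := by
  simp only [ghCoeff, Nat.cast_zero]
  rw [show ((0:ℝ)-1)/2 = -(1/2) by norm_num, show -((0:ℝ)+1)/2 = -(1/2) by norm_num,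
    show ((0:ℝ)+1)/2 = 1/2 by norm_num, Real.Gamma_one_half_eq,
    Real.rpow_neg (by norm_num : (0:ℝ) ≤ 2), Real.rpow_neg (Nat.cast_nonneg n),
    ← Real.sqrt_eq_rpow, ← Real.sqrt_eq_rpow,
    Real.sqrt_div Real.pi_nonneg, Real.sqrt_mul (by norm_num : (0:ℝ) ≤ 2)]
  rw [div_eq_mul_inv, mul_inv]
  ring

lemma gh_integrable (n k : ℕ) (hn : 0 < n) :
    Integrable fun x : ℝ => x ^ k * Real.exp (-((n : ℝ) * x ^ 2) / 2) := by
  have hn' : (0:ℝ) < n := by exact_mod_cast hn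
  have hq : (-1:ℝ) < (k:ℝ) := by
    have := Nat.cast_nonneg (α := ℝ) k; linarith
  have key := integrable_rpow_mul_exp_neg_mul_sq (b := (n:ℝ)/2) (by positivity) hq
  have : (fun x : ℝ => x ^ k * Real.exp (-((n : ℝ) * x ^ 2) / 2))
      = fun x : ℝ => x ^ (k:ℝ) * Real.exp (-((n:ℝ)/2) * x ^ 2) := by
    funext x; rw [Real.rpow_natCast]; ring_nf
  rw [this]; exact key

lemma gh_moment_even (n k : ℕ) (hk : Even k) :
    (∫ x : ℝ, x ^ k * Real.exp (-((n : ℝ) * x ^ 2) / 2))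
      = 2 * ∫ x in Set.Ioi (0:ℝ), x ^ k * Real.exp (-((n : ℝ) * x ^ 2) / 2) := by
  rw [← integral_comp_abs (f := fun x : ℝ => x ^ k * Real.exp (-((n : ℝ) * x ^ 2) / 2))]
  congr 1; funext x
  rw [hk.pow_abs, sq_abs]

lemma gh_moment_odd (n k : ℕ) (hk : Odd k) :
    (∫ x : ℝ, x ^ k * Real.exp (-((n : ℝ) * x ^ 2) / 2)) = 0 := by
  set f : ℝ → ℝ := fun x => x ^ k * Real.exp (-((n : ℝ) * x ^ 2) / 2) with hf
  have h1 : (∫ x : ℝ, f (-x)) = ∫ x : ℝ, f x := integral_neg_eq_self f volume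
  have h2 : (∫ x : ℝ, f (-x)) = - ∫ x : ℝ, f x := by
    rw [← integral_neg]
    congr 1; funext x
    simp only [hf, neg_neg, neg_sq, hk.neg_pow]
    ring
  have h3 : (∫ x : ℝ, f x) = - ∫ x : ℝ, f x := h1.symm.trans h2
  show (∫ x : ℝ, f x) = 0
  linarith [h3]

lemma gh_poly_integral (n : ℕ) (hn : 0 < n) (C0 C1 C2 C3 C4 : ℝ) :
    (∫ a : ℝ, (C0 + C1*a + C2*a^2 + C3*a^3 + C4*a^4) * Real.exp (-((n:ℝ)*a^2)/2))
      = C0 * (2*ghCoeff n 0) + C2 * (2*ghCoeff n 2) + C4 * (2*ghCoeff n 4) := by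
  have I : ∀ k : ℕ, Integrable fun a : ℝ => a ^ k * Real.exp (-((n:ℝ)*a^2)/2) :=
    fun k => gh_integrable n k hn
  have hsplit : (fun a : ℝ => (C0 + C1*a + C2*a^2 + C3*a^3 + C4*a^4)
        * Real.exp (-((n:ℝ)*a^2)/2))
      = fun a : ℝ => ∑ j ∈ Finset.range 5,
          ([C0, C1, C2, C3, C4].getD j 0) * (a ^ (j:ℕ) * Real.exp (-((n:ℝ)*a^2)/2)) := by
    funext a
    simp [Finset.sum_range_succ]
    ring
  rw [hsplit, integral_finset_sum _
    (fun j _ => ((I j).const_mul ([C0, C1, C2, C3, C4].getD j 0)))]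
  simp only [Finset.sum_range_succ, Finset.sum_range_zero, integral_const_mul]
  rw [gh_moment_odd n 1 (by decide), gh_moment_odd n 3 (by decide),
    gh_moment_even n 0 (by decide), gh_moment_even n 2 (by decide),
    gh_moment_even n 4 (by decide),
    gh_integral n 0 hn, gh_integral n 2 hn, gh_integral n 4 hn]
  simp [Matrix.cons_val_zero, Matrix.cons_val_one]

end ghAux

open Real Set

/-- the LBI statistic against the generalized hyperbolic alternatives with fixed
skewness parameter `β`.  With `cₗ = ∫₀^∞ x^l exp(-n x²/2) dx = 2^{(l-1)/2} n^{-(l+1)/2} Γ((l+1)/2)`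
and `c₀ = √(π/(2n))`, the LBI integral of the score `(β/2)x³ + (1/8)x⁴` equals
`(c₀/4)(c_{n+2} ∑ zᵢ⁴ + 4β c_{n+1} ∑ zᵢ³) + B` for a constant `B` not depending on `z`. -/
theorem lbi_generalized_hyperbolic (n : ℕ) (hn : 3 ≤ n) (β : ℝ) :
    (∀ l : ℕ, (∫ x in Set.Ioi (0 : ℝ), x ^ l * Real.exp (-((n : ℝ) * x ^ 2) / 2)) = ghCoeff n l)
    ∧ ghCoeff n 0 = Real.sqrt (Real.pi / (2 * (n : ℝ)))
    ∧ ∃ B : ℝ, ∀ z : Fin n → ℝ, (∑ i, z i = 0) → (∑ i, (z i) ^ 2 = (n : ℝ)) →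
      (∫ b in Set.Ioi (0 : ℝ), ∫ a : ℝ,
          (∑ i, (β / 2 * (a + b * z i) ^ 3 + 1 / 8 * (a + b * z i) ^ 4)) *
            Real.exp (-((n : ℝ) * (a ^ 2 + b ^ 2)) / 2) * b ^ (n - 2))
        = ghCoeff n 0 / 4 *
            (ghCoeff n (n + 2) * (∑ i, (z i) ^ 4) + 4 * β * ghCoeff n (n + 1) * (∑ i, (z i) ^ 3))
          + B := by
  have hn0 : 0 < n := by omega
  refine ⟨fun l => gh_integral n l hn0, gh_zero n, ?_⟩
  refine ⟨(n:ℝ)/8 * (2*ghCoeff n 4) * ghCoeff n (n-2)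
      + 3*(n:ℝ)/4 * (2*ghCoeff n 2) * ghCoeff n n, fun z hz1 hz2 => ?_⟩
  set S3 : ℝ := ∑ i, (z i)^3 with hS3
  set S4 : ℝ := ∑ i, (z i)^4 with hS4
  have expand : ∀ a b : ℝ,
      (∑ i, (β / 2 * (a + b * z i) ^ 3 + 1 / 8 * (a + b * z i) ^ 4))
        = (β/2*b^3*S3 + 1/8*b^4*S4)
          + (1/2*b^3*S3 + 3*β/2*b^2*(n:ℝ)) * a
          + (3/4*b^2*(n:ℝ)) * a^2 + (β/2*(n:ℝ)) * a^3 + (1/8*(n:ℝ)) * a^4 := by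
    intro a b
    have h : ∀ i : Fin n, β / 2 * (a + b * z i) ^ 3 + 1 / 8 * (a + b * z i) ^ 4
        = (β/2*a^3 + 1/8*a^4)
          + (3*β/2*a^2*b + 1/2*a^3*b) * z i
          + (3*β/2*a*b^2 + 3/4*a^2*b^2) * (z i)^2
          + (β/2*b^3 + 1/2*a*b^3) * (z i)^3
          + (1/8*b^4) * (z i)^4 := fun i => by ring
    rw [Finset.sum_congr rfl fun i _ => h i]
    rw [Finset.sum_add_distrib, Finset.sum_add_distrib, Finset.sum_add_distrib,
      Finset.sum_add_distrib, ← Finset.mul_sum, ← Finset.mul_sum, ← Finset.mul_sum,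
      ← Finset.mul_sum, Finset.sum_const, hz1, hz2, ← hS3, ← hS4]
    simp only [Finset.card_univ, Fintype.card_fin, nsmul_eq_mul]
    ring
  have inner_eq : ∀ b : ℝ,
      (∫ a : ℝ, (∑ i, (β / 2 * (a + b * z i) ^ 3 + 1 / 8 * (a + b * z i) ^ 4)) *
          Real.exp (-((n : ℝ) * (a ^ 2 + b ^ 2)) / 2) * b ^ (n - 2))
        = ((β/2*b^3*S3 + 1/8*b^4*S4) * (2*ghCoeff n 0)
            + (3/4*b^2*(n:ℝ)) * (2*ghCoeff n 2) + (1/8*(n:ℝ)) * (2*ghCoeff n 4))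
          * (Real.exp (-((n:ℝ)*b^2)/2) * b ^ (n-2)) := by
    intro b
    have hsplit : ∀ a : ℝ,
        (∑ i, (β / 2 * (a + b * z i) ^ 3 + 1 / 8 * (a + b * z i) ^ 4)) *
          Real.exp (-((n : ℝ) * (a ^ 2 + b ^ 2)) / 2) * b ^ (n - 2)
        = (((β/2*b^3*S3 + 1/8*b^4*S4)
            + (1/2*b^3*S3 + 3*β/2*b^2*(n:ℝ)) * a
            + (3/4*b^2*(n:ℝ)) * a^2 + (β/2*(n:ℝ)) * a^3 + (1/8*(n:ℝ)) * a^4)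
            * Real.exp (-((n:ℝ)*a^2)/2))
          * (Real.exp (-((n:ℝ)*b^2)/2) * b ^ (n-2)) := by
      intro a
      rw [expand a b,
        show -((n:ℝ)*(a^2+b^2))/2 = -((n:ℝ)*a^2)/2 + -((n:ℝ)*b^2)/2 by ring, Real.exp_add]
      ring
    simp only [hsplit]
    rw [integral_mul_const, gh_poly_integral n hn0]
  rw [setIntegral_congr_fun measurableSet_Ioi (fun b _ => inner_eq b)]
  have h2 : n - 2 + 2 = n := by omega
  have h3 : n - 2 + 3 = n + 1 := by omega
  have h4 : n - 2 + 4 = n + 2 := by omega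
  have houter : ∀ b : ℝ,
      ((β/2*b^3*S3 + 1/8*b^4*S4) * (2*ghCoeff n 0)
          + (3/4*b^2*(n:ℝ)) * (2*ghCoeff n 2) + (1/8*(n:ℝ)) * (2*ghCoeff n 4))
        * (Real.exp (-((n:ℝ)*b^2)/2) * b ^ (n-2))
      = (1/8*(n:ℝ) * (2*ghCoeff n 4)) * (b ^ (n-2) * Real.exp (-((n:ℝ)*b^2)/2))
        + (3/4*(n:ℝ) * (2*ghCoeff n 2)) * (b ^ n * Real.exp (-((n:ℝ)*b^2)/2))
        + (β/2*S3 * (2*ghCoeff n 0)) * (b ^ (n+1) * Real.exp (-((n:ℝ)*b^2)/2))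
        + (1/8*S4 * (2*ghCoeff n 0)) * (b ^ (n+2) * Real.exp (-((n:ℝ)*b^2)/2)) := by
    intro b
    have e2 : b ^ n = b ^ (n-2) * b ^ 2 := by rw [← pow_add, h2]
    have e3 : b ^ (n+1) = b ^ (n-2) * b ^ 3 := by rw [← pow_add, h3]
    have e4 : b ^ (n+2) = b ^ (n-2) * b ^ 4 := by rw [← pow_add, h4]
    rw [e2, e3, e4]
    ring
  rw [setIntegral_congr_fun measurableSet_Ioi (fun b _ => houter b)]
  have I : ∀ k : ℕ, IntegrableOn
      (fun b : ℝ => b ^ k * Real.exp (-((n:ℝ)*b^2)/2)) (Set.Ioi 0) :=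
    fun k => (gh_integrable n k hn0).integrableOn
  have I1 : Integrable (fun x : ℝ =>
        1/8*(n:ℝ) * (2*ghCoeff n 4) * (x ^ (n-2) * Real.exp (-((n:ℝ)*x^2)/2)))
      (volume.restrict (Set.Ioi 0)) := (I (n-2)).const_mul _
  have I2 : Integrable (fun x : ℝ =>
        3/4*(n:ℝ) * (2*ghCoeff n 2) * (x ^ n * Real.exp (-((n:ℝ)*x^2)/2)))
      (volume.restrict (Set.Ioi 0)) := (I n).const_mul _
  have I3 : Integrable (fun x : ℝ =>
        β/2*S3 * (2*ghCoeff n 0) * (x ^ (n+1) * Real.exp (-((n:ℝ)*x^2)/2)))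
      (volume.restrict (Set.Ioi 0)) := (I (n+1)).const_mul _
  have I4 : Integrable (fun x : ℝ =>
        1/8*S4 * (2*ghCoeff n 0) * (x ^ (n+2) * Real.exp (-((n:ℝ)*x^2)/2)))
      (volume.restrict (Set.Ioi 0)) := (I (n+2)).const_mul _
  have I12 : Integrable (fun x : ℝ =>
        1/8*(n:ℝ) * (2*ghCoeff n 4) * (x ^ (n-2) * Real.exp (-((n:ℝ)*x^2)/2))
        + 3/4*(n:ℝ) * (2*ghCoeff n 2) * (x ^ n * Real.exp (-((n:ℝ)*x^2)/2)))
      (volume.restrict (Set.Ioi 0)) := I1.add I2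
  have I123 : Integrable (fun x : ℝ =>
        1/8*(n:ℝ) * (2*ghCoeff n 4) * (x ^ (n-2) * Real.exp (-((n:ℝ)*x^2)/2))
        + 3/4*(n:ℝ) * (2*ghCoeff n 2) * (x ^ n * Real.exp (-((n:ℝ)*x^2)/2))
        + β/2*S3 * (2*ghCoeff n 0) * (x ^ (n+1) * Real.exp (-((n:ℝ)*x^2)/2)))
      (volume.restrict (Set.Ioi 0)) := I12.add I3
  rw [integral_add I123 I4, integral_add I12 I3, integral_add I1 I2]
  rw [integral_const_mul, integral_const_mul, integral_const_mul, integral_const_mul,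
    gh_integral n (n-2) hn0, gh_integral n n hn0, gh_integral n (n+1) hn0,
    gh_integral n (n+2) hn0]
  ring
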